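/- The map I ↦ π(I) is a bijection from irreducible Grassmann necklaces of type (k,n) to derangements of {1,…,n} with exactly k excedances; moreover the excedance positions of π(I) are exactly the elements of I_1. -/

import Mathlib

set_option linter.unusedSectionVars false
open Fin.CommRing

variable {n : ℕ} [NeZero n]

lemma sub_val_eq (a b : Fin n) :
    (a - b).val = if b.val ≤ a.val then a.val - b.val else a.val + n - b.val := by
  rw [Fin.sub_def]
  simp only [Fin.val_mk]
  have ha := a.isLt; have hb := b.isLt
  split_ifs with h
  · have h2 : n - b.val + a.val = (a.val - b.val) + n := by omega
    rw [h2, Nat.add_mod_right, Nat.mod_eq_of_lt (by omega)]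
  · rw [Nat.mod_eq_of_lt (show n - b.val + a.val < n by omega)]; omega

lemma sub_eq_zero_iff' (a b : Fin n) : (a - b).val = 0 ↔ a = b := by
  rw [sub_val_eq]; have ha := a.isLt; have hb := b.isLt
  constructor
  · intro h; apply Fin.ext; split_ifs at h <;> omega
  · intro h; subst h; simp

lemma succ_sub_val (a b : Fin n) :
    ((a + 1) - b).val = ((a - b).val + 1) % n := by
  have h : a + 1 - b = (a - b) + 1 := by ring
  rw [h, Fin.add_def]
  simp only [Fin.val_one']
  conv_rhs => rw [Nat.add_mod]
  rw [Nat.mod_eq_of_lt (Fin.isLt _)]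

def Dmem (π : Equiv.Perm (Fin n)) (x i : Fin n) : Prop :=
  x = i ∨ ((π x - x).val < (i - x).val)

instance (π : Equiv.Perm (Fin n)) (i : Fin n) : DecidablePred (fun x => Dmem π x i) :=
  fun _ => by unfold Dmem; infer_instance

lemma dmem_self (π : Equiv.Perm (Fin n)) (x : Fin n) : Dmem π x x := Or.inl rfl

lemma dmem_succ (π : Equiv.Perm (Fin n)) {x : Fin n} (hx : π x ≠ x) (i : Fin n) :
    Dmem π x (i + 1) ↔ π x = i ∨ (Dmem π x i ∧ x ≠ i) := by
  have hv : (π x - x).val ≠ 0 := fun h => hx ((sub_eq_zero_iff' _ _).mp h)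
  have hvlt := (π x - x).isLt
  have hult := (i - x).isLt
  have hw := succ_sub_val i x
  have e1 : x = i + 1 ↔ ((i+1) - x).val = 0 := by rw [sub_eq_zero_iff']; exact eq_comm
  have e2 : π x = i ↔ (π x - x).val = (i - x).val := by
    constructor
    · intro h; rw [h]
    · intro h; have := Fin.ext h; exact sub_left_inj.mp this
  have e3 : x = i ↔ (i - x).val = 0 := by rw [sub_eq_zero_iff']; exact eq_comm
  unfold Dmem
  rw [e1, e2, e3, hw]
  rcases Nat.lt_or_ge ((i - x).val + 1) n with h | h
  · rw [Nat.mod_eq_of_lt h]; omega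
  · have h2 : (i - x).val + 1 = n := by omega
    rw [h2, Nat.mod_self]; omega

lemma dmem_zero (π : Equiv.Perm (Fin n)) {x : Fin n} (hx : π x ≠ x) :
    Dmem π x 0 ↔ x < π x := by
  have hv : (π x - x).val ≠ 0 := fun h => hx ((sub_eq_zero_iff' _ _).mp h)
  have h1 := sub_val_eq (π x) x
  have h2 := sub_val_eq (0 : Fin n) x
  have hx0 : (0 : Fin n).val = 0 := rfl
  have e : x = 0 ↔ x.val = 0 := by rw [Fin.ext_iff, hx0]
  have := (π x).isLt; have := x.isLt
  unfold Dmem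
  rw [Fin.lt_def, e, h1, h2, hx0]
  split_ifs <;> omega


/-- An irreducible Grassmann necklace of type `(k,n)`, with indices in `Fin n` (mod `n`):
a sequence `(I_i)` of `k`-element subsets with `i ∈ I_i` and
`I_{i+1} = (I_i \ {i}) ∪ {j}` for some `j ≠ i`, for every `i`. -/
structure GrassmannNecklace (n k : ℕ) [NeZero n] where
  I : Fin n → Finset (Fin n)
  card_eq : ∀ i, (I i).card = k
  mem_self : ∀ i, i ∈ I i
  step : ∀ i, ∃ j, j ≠ i ∧ I (i + 1) = insert j ((I i).erase i)

/-- Derangements of `{1,…,n}` with exactly `k` excedances. -/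
def DerangementsWithExcedances (n k : ℕ) :=
  {π : Equiv.Perm (Fin n) //
    (∀ i, π i ≠ i) ∧ (Finset.univ.filter (fun i => i < π i)).card = k}

namespace GNaux

variable {k : ℕ} (N : GrassmannNecklace n k)

lemma GN_ext {N N' : GrassmannNecklace n k} (h : N.I = N'.I) : N = N' := by
  cases N; cases N'; cases h; rfl

noncomputable def nf (i : Fin n) : Fin n := (N.step i).choose

lemma nf_ne (i : Fin n) : nf N i ≠ i := (N.step i).choose_spec.1

lemma nf_step (i : Fin n) : N.I (i + 1) = insert (nf N i) ((N.I i).erase i) :=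
  (N.step i).choose_spec.2

include N in
lemma k_pos : 0 < k := by
  have h := N.card_eq 0
  rw [← h]
  exact Finset.card_pos.mpr ⟨0, N.mem_self 0⟩

lemma not_mem_of_step {i j : Fin n} (hj : j ≠ i)
    (h : N.I (i + 1) = insert j ((N.I i).erase i)) : j ∉ N.I i := by
  intro hmem
  have hje : j ∈ (N.I i).erase i := Finset.mem_erase.mpr ⟨hj, hmem⟩
  have h1 : (N.I (i + 1)).card = k := N.card_eq _
  have h2 : ((N.I i).erase i).card = k - 1 := by
    rw [Finset.card_erase_of_mem (N.mem_self i), N.card_eq]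
  rw [h, Finset.insert_eq_self.mpr hje, h2] at h1
  have := k_pos N; omega

lemma nf_not_mem (i : Fin n) : nf N i ∉ N.I i :=
  not_mem_of_step N (nf_ne N i) (nf_step N i)

lemma nf_unique {i j : Fin n} (hj : j ≠ i)
    (h : N.I (i + 1) = insert j ((N.I i).erase i)) : j = nf N i := by
  have h2 := nf_step N i
  have ha : j ∉ (N.I i).erase i :=
    fun hm => not_mem_of_step N hj h (Finset.mem_of_mem_erase hm)
  rw [h] at h2
  exact (Finset.insert_inj ha).mp h2

lemma mem_succ_iff (i x : Fin n) :
    x ∈ N.I (i + 1) ↔ x = nf N i ∨ (x ∈ N.I i ∧ x ≠ i) := by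
  rw [nf_step N i]
  simp only [Finset.mem_insert, Finset.mem_erase]
  tauto

lemma cast_add_one' (x : Fin n) (t : ℕ) :
    x + ((t + 1 : ℕ) : Fin n) = (x + (t : ℕ)) + 1 := by push_cast; ring

lemma hex (x : Fin n) : ∃ t : ℕ, 1 ≤ t ∧ x ∈ N.I (x + (t : ℕ)) :=
  ⟨n, Nat.pos_of_ne_zero (NeZero.ne n), by rw [Fin.natCast_self, add_zero]; exact N.mem_self x⟩

noncomputable def Nt1 (x : Fin n) : ℕ := Nat.find (hex N x)

lemma Nt1_mem (x : Fin n) : x ∈ N.I (x + ((Nt1 N x : ℕ) : Fin n)) := (Nat.find_spec (hex N x)).2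

lemma Nt1_le (x : Fin n) : Nt1 N x ≤ n :=
  Nat.find_le ⟨Nat.pos_of_ne_zero (NeZero.ne n), by rw [Fin.natCast_self, add_zero]; exact N.mem_self x⟩

lemma not_mem_one (x : Fin n) : x ∉ N.I (x + ((1 : ℕ) : Fin n)) := by
  rw [Nat.cast_one, mem_succ_iff]
  rintro (h | ⟨-, h⟩)
  · exact nf_ne N x h.symm
  · exact h rfl

lemma Nt1_ge2 (x : Fin n) : 2 ≤ Nt1 N x := by
  by_contra h
  have h1 : Nt1 N x = 1 := by
    have := (Nat.find_spec (hex N x)).1; unfold Nt1 at *; omega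
  have := Nt1_mem N x
  rw [h1] at this
  exact not_mem_one N x this

lemma Nt1_min {x : Fin n} {t : ℕ} (h1 : 1 ≤ t) (h2 : t < Nt1 N x) :
    x ∉ N.I (x + (t : ℕ)) := fun hm => Nat.find_min (hex N x) h2 ⟨h1, hm⟩

lemma mem_of_ge (x : Fin n) : ∀ t : ℕ, Nt1 N x ≤ t → t ≤ n → x ∈ N.I (x + (t : ℕ)) := by
  intro t
  induction t with
  | zero => intro h _; have := Nt1_ge2 N x; omega
  | succ t ih =>
    intro h1 h2
    rcases Nat.lt_or_ge t (Nt1 N x) with h | h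
    · have ht : t + 1 = Nt1 N x := by omega
      rw [ht]; exact Nt1_mem N x
    · have hmem := ih h (by omega)
      rw [cast_add_one', mem_succ_iff]
      right
      refine ⟨hmem, ?_⟩
      intro he
      have h0 : ((t : ℕ) : Fin n) = 0 := by
        have : x + ((t : ℕ) : Fin n) = x + 0 := by rw [add_zero]; exact he.symm
        exact add_left_cancel this
      have : t % n = 0 := by
        have := congrArg Fin.val h0; rwa [Fin.val_natCast] at this
      have h2t : 2 ≤ Nt1 N x := Nt1_ge2 N x
      have : t % n = t := Nat.mod_eq_of_lt (by omega)
      omega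

lemma mem_iff_nat (x : Fin n) (t : ℕ) (ht : t < n) :
    x ∈ N.I (x + (t : ℕ)) ↔ t = 0 ∨ Nt1 N x ≤ t := by
  constructor
  · intro h
    by_contra hc
    push_neg at hc
    exact Nt1_min N (by omega) (by omega) h
  · rintro (h | h)
    · subst h; rw [Nat.cast_zero, add_zero]; exact N.mem_self x
    · exact mem_of_ge N x t h (by omega)

lemma nf_rise (x : Fin n) : nf N (x + ((Nt1 N x - 1 : ℕ) : Fin n)) = x := by
  have h2 := Nt1_ge2 N x
  have hnm : x ∉ N.I (x + ((Nt1 N x - 1 : ℕ) : Fin n)) :=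
    Nt1_min N (by omega) (by omega)
  have hm := Nt1_mem N x
  have he : (Nt1 N x : ℕ) = (Nt1 N x - 1) + 1 := by omega
  rw [he, cast_add_one', mem_succ_iff] at hm
  rcases hm with h | ⟨h, -⟩
  · exact h.symm
  · exact absurd h hnm

lemma nf_surj : Function.Surjective (nf N) := fun x => ⟨_, nf_rise N x⟩

lemma nf_bij : Function.Bijective (nf N) := Finite.surjective_iff_bijective.mp (nf_surj N)

noncomputable def πN : Equiv.Perm (Fin n) := (Equiv.ofBijective (nf N) (nf_bij N)).symm

lemma nf_πN (y : Fin n) : nf N (πN N y) = y :=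
  (Equiv.ofBijective (nf N) (nf_bij N)).apply_symm_apply y

lemma πN_nf (i : Fin n) : πN N (nf N i) = i :=
  (Equiv.ofBijective (nf N) (nf_bij N)).symm_apply_apply i

lemma πN_eq (x : Fin n) : πN N x = x + ((Nt1 N x - 1 : ℕ) : Fin n) :=
  (nf_bij N).injective (by rw [nf_πN, nf_rise])

lemma πN_ne (x : Fin n) : πN N x ≠ x := by
  intro h
  have := nf_πN N x
  rw [h] at this
  exact nf_ne N x this

lemma sub_πN_val (x : Fin n) : (πN N x - x).val = Nt1 N x - 1 := by
  rw [πN_eq, add_sub_cancel_left, Fin.val_natCast]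
  have := Nt1_le N x; have := Nt1_ge2 N x
  exact Nat.mod_eq_of_lt (by omega)

lemma mem_iff_dmem (x i : Fin n) : x ∈ N.I i ↔ Dmem (πN N) x i := by
  have hi : i = x + (((i - x).val : ℕ) : Fin n) := by
    rw [Fin.cast_val_eq_self]; group
  have ht := (i - x).isLt
  have hx0 : x = i ↔ (i - x).val = 0 := by rw [sub_eq_zero_iff']; exact eq_comm
  conv_lhs => rw [hi]
  rw [mem_iff_nat N x _ ht]
  unfold Dmem
  rw [hx0, sub_πN_val]
  have := Nt1_ge2 N x
  omega

lemma excedance_set : Finset.univ.filter (fun x => x < πN N x) = N.I 0 := by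
  ext x
  simp only [Finset.mem_filter, Finset.mem_univ, true_and]
  rw [mem_iff_dmem, dmem_zero _ (πN_ne N x)]

end GNaux

namespace GNaux

variable {k : ℕ}

def ΨI (π : Equiv.Perm (Fin n)) (i : Fin n) : Finset (Fin n) :=
  Finset.univ.filter (fun x => Dmem π x i)

lemma ΨI_mem (π : Equiv.Perm (Fin n)) (x i : Fin n) : x ∈ ΨI π i ↔ Dmem π x i := by
  simp [ΨI]

lemma ΨI_self (π : Equiv.Perm (Fin n)) (i : Fin n) : i ∈ ΨI π i :=
  (ΨI_mem π i i).mpr (dmem_self π i)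

lemma symm_ne (π : Equiv.Perm (Fin n)) (hd : ∀ x, π x ≠ x) (i : Fin n) : π.symm i ≠ i := by
  intro h
  have := π.apply_symm_apply i
  rw [h] at this
  exact hd i this

lemma ΨI_step (π : Equiv.Perm (Fin n)) (hd : ∀ x, π x ≠ x) (i : Fin n) :
    ΨI π (i + 1) = insert (π.symm i) ((ΨI π i).erase i) := by
  ext x
  rw [ΨI_mem, dmem_succ π (hd x), Finset.mem_insert, Finset.mem_erase, ΨI_mem]
  have h : π x = i ↔ x = π.symm i := by
    constructor
    · intro h; rw [← h, Equiv.symm_apply_apply]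
    · intro h; rw [h, Equiv.apply_symm_apply]
  rw [h]
  tauto

lemma ΨI_symm_not_mem (π : Equiv.Perm (Fin n)) (hd : ∀ x, π x ≠ x) (i : Fin n) :
    π.symm i ∉ ΨI π i := by
  rw [ΨI_mem]
  rintro (h | h)
  · exact symm_ne π hd i h
  · rw [Equiv.apply_symm_apply] at h
    exact lt_irrefl _ h

lemma ΨI_zero (π : Equiv.Perm (Fin n)) (hd : ∀ x, π x ≠ x) :
    ΨI π 0 = Finset.univ.filter (fun x => x < π x) := by
  ext x
  rw [ΨI_mem, Finset.mem_filter]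
  simp only [Finset.mem_univ, true_and]
  exact dmem_zero π (hd x)

lemma ΨI_card (π : Equiv.Perm (Fin n)) (hd : ∀ x, π x ≠ x)
    (hk : (Finset.univ.filter (fun x => x < π x)).card = k) (i : Fin n) :
    (ΨI π i).card = k := by
  have base : (ΨI π 0).card = k := by rw [ΨI_zero π hd]; exact hk
  have stepc : ∀ j : Fin n, (ΨI π (j + 1)).card = (ΨI π j).card := by
    intro j
    rw [ΨI_step π hd]
    rw [Finset.card_insert_of_notMem
      (fun hm => ΨI_symm_not_mem π hd j (Finset.mem_of_mem_erase hm)),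
      Finset.card_erase_of_mem (ΨI_self π j)]
    have : 0 < (ΨI π j).card := Finset.card_pos.mpr ⟨j, ΨI_self π j⟩
    omega
  have hall : ∀ m : ℕ, (ΨI π ((m : ℕ) : Fin n)).card = k := by
    intro m
    induction m with
    | zero => rw [Nat.cast_zero]; exact base
    | succ m ih => rw [Nat.cast_add, Nat.cast_one, stepc]; exact ih
  have := hall i.val
  rwa [Fin.cast_val_eq_self] at this

def Ψmap (p : DerangementsWithExcedances n k) : GrassmannNecklace n k where
  I := ΨI p.1
  card_eq := ΨI_card p.1 p.2.1 p.2.2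
  mem_self := ΨI_self p.1
  step := fun i => ⟨p.1.symm i, symm_ne p.1 p.2.1 i, ΨI_step p.1 p.2.1 i⟩

noncomputable def Φmap (N : GrassmannNecklace n k) : DerangementsWithExcedances n k :=
  ⟨πN N, πN_ne N, by rw [excedance_set]; exact N.card_eq 0⟩

noncomputable def ΦEquiv : GrassmannNecklace n k ≃ DerangementsWithExcedances n k where
  toFun := Φmap
  invFun := Ψmap
  left_inv := by
    intro N
    apply GN_ext
    funext i
    ext x
    rw [show (Ψmap (Φmap N)).I = ΨI (πN N) from rfl, ΨI_mem, ← mem_iff_dmem]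
  right_inv := by
    intro p
    apply Subtype.ext
    show πN (Ψmap p) = p.1
    have hnf : ∀ i, nf (Ψmap p) i = p.1.symm i := by
      intro i
      exact (nf_unique (Ψmap p) (symm_ne p.1 p.2.1 i) (ΨI_step p.1 p.2.1 i)).symm
    apply Equiv.ext
    intro y
    have h1 : p.1.symm (πN (Ψmap p) y) = y := by rw [← hnf, nf_πN]
    have := congrArg p.1 h1
    rwa [Equiv.apply_symm_apply] at this

end GNaux

/-- The map `I ↦ π(I)`, defined by `π(j) = i` whenever
`I_{i+1} = (I_i \ {i}) ∪ {j}`, is a bijection from irreducible Grassmann necklaces of type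
`(k,n)` to derangements of `{1,…,n}` with exactly `k` excedances, and moreover the
excedance positions of `π(I)` are exactly the elements of `I_1` (the first entry,
here indexed by `0`). -/
theorem necklace_derangement_bijection (n k : ℕ) [NeZero n] :
    ∃! Φ : GrassmannNecklace n k ≃ DerangementsWithExcedances n k,
      ∀ N : GrassmannNecklace n k,
        (∀ i j : Fin n, j ≠ i → N.I (i + 1) = insert j ((N.I i).erase i) →
          (Φ N).1 j = i) ∧
        Finset.univ.filter (fun i => i < (Φ N).1 i) = N.I 0 := by
  refine ⟨GNaux.ΦEquiv, ?_, ?_⟩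
  · intro N
    constructor
    · intro i j hj h
      have hje : j = GNaux.nf N i := GNaux.nf_unique N hj h
      rw [hje]
      exact GNaux.πN_nf N i
    · exact GNaux.excedance_set N
  · intro Φ' hΦ'
    apply Equiv.ext
    intro N
    apply Subtype.ext
    apply Equiv.ext
    intro y
    obtain ⟨i, rfl⟩ := GNaux.nf_surj N y
    rw [(hΦ' N).1 i (GNaux.nf N i) (GNaux.nf_ne N i) (GNaux.nf_step N i)]
    exact (GNaux.πN_nf N i).symm
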